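/- (Frankl–Wilson-type special case) Let p be a prime and L ⊆ F_p. If ℱ ⊆ 2^[n] satisfies |A| mod p ∉ L for all A ∈ ℱ, and |A ∩ B| mod p ∈ L for all distinct A, B ∈ ℱ, then |ℱ| ≤ ∑_{s=0}^{|L|} C(n, s). -/

import Mathlib

open Finset Module Submodule

namespace FranklWilsonAux

variable (p : ℕ) {n : ℕ}

/-- indicator function of `T ⊆ S` -/
def eT (T : Finset (Fin n)) : Finset (Fin n) → ZMod p :=
  fun S => if T ⊆ S then 1 else 0

/-- span of indicators of sets of size at most `d` -/
def Vd (n d : ℕ) : Submodule (ZMod p) (Finset (Fin n) → ZMod p) :=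
  Submodule.span (ZMod p) (eT p '' {T : Finset (Fin n) | T.card ≤ d})

lemma eT_mul (T T' : Finset (Fin n)) : eT p T * eT p T' = eT p (T ∪ T') := by
  funext S
  simp only [eT, Pi.mul_apply, Finset.union_subset_iff]
  by_cases h1 : T ⊆ S <;> by_cases h2 : T' ⊆ S <;> simp [h1, h2]

lemma mul_mem_Vd {a b : ℕ} {x y : Finset (Fin n) → ZMod p}
    (hx : x ∈ Vd p n a) (hy : y ∈ Vd p n b) : x * y ∈ Vd p n (a + b) := by
  have h : Vd p n a * Vd p n b ≤ Vd p n (a + b) := by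
    rw [Vd, Vd, Submodule.span_mul_span]
    apply Submodule.span_mono
    rintro _ ⟨_, ⟨T, hT, rfl⟩, _, ⟨T', hT', rfl⟩, rfl⟩
    exact ⟨T ∪ T', le_trans (Finset.card_union_le T T') (Nat.add_le_add hT hT'),
      (eT_mul p T T').symm⟩
  exact h (Submodule.mul_mem_mul hx hy)

lemma one_mem_Vd (d : ℕ) : (1 : Finset (Fin n) → ZMod p) ∈ Vd p n d := by
  have h : (1 : Finset (Fin n) → ZMod p) = eT p ∅ := by
    funext S; simp [eT]
  rw [h]
  exact Submodule.subset_span ⟨∅, by simp, rfl⟩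

lemma prod_mem_Vd {ι : Type*} [DecidableEq ι] (s : Finset ι)
    (g : ι → Finset (Fin n) → ZMod p)
    (hg : ∀ i ∈ s, g i ∈ Vd p n 1) : (∏ i ∈ s, g i) ∈ Vd p n s.card := by
  induction s using Finset.cons_induction with
  | empty => simpa using one_mem_Vd p 0
  | cons i s his ih =>
    rw [Finset.prod_cons, Finset.card_cons]
    have := mul_mem_Vd p (hg i (Finset.mem_cons_self _ _))
      (ih fun j hj => hg j (Finset.mem_cons_of_mem hj))
    simpa [Nat.add_comm] using this

lemma factor_mem (A : Finset (Fin n)) (l : ZMod p) :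
    (fun S => ((A ∩ S).card : ZMod p) - l) ∈ Vd p n 1 := by
  have h1 : (fun S => ((A ∩ S).card : ZMod p)) = ∑ i ∈ A, eT p {i} := by
    funext S
    rw [Finset.sum_apply]
    simp only [eT, Finset.singleton_subset_iff]
    rw [Finset.sum_boole, Finset.filter_mem_eq_inter]
  have h2 : (fun S => ((A ∩ S).card : ZMod p) - l)
      = (∑ i ∈ A, eT p {i}) - l • eT p ∅ := by
    funext S
    have := congrFun h1 S
    simp only [Pi.sub_apply, Pi.smul_apply, eT, Finset.empty_subset, if_pos,
      smul_eq_mul, mul_one]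
    rw [← this]
  rw [h2]
  refine sub_mem (Submodule.sum_mem _ fun i hi => Submodule.subset_span ⟨{i}, by simp, rfl⟩)
    (Submodule.smul_mem _ _ (Submodule.subset_span ⟨∅, by simp, rfl⟩))

end FranklWilsonAux

open FranklWilsonAux

/-- The Frankl–Wilson theorem on forbidden intersections: if `L ⊆ F_p` and `ℱ ⊆ 2^[n]` is such
that `|A| mod p ∉ L` for every `A ∈ ℱ` while `|A ∩ B| mod p ∈ L` for all distinct `A, B ∈ ℱ`,
then `|ℱ| ≤ ∑_{s=0}^{|L|} C(n,s)`. -/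
theorem frankl_wilson {p : ℕ} [Fact p.Prime] {n : ℕ} (L : Finset (ZMod p))
    (ℱ : Finset (Finset (Fin n)))
    (h1 : ∀ A ∈ ℱ, ((A.card : ZMod p) ∉ L))
    (h2 : ∀ A ∈ ℱ, ∀ B ∈ ℱ, A ≠ B → (((A ∩ B).card : ZMod p) ∈ L)) :
    ℱ.card ≤ ∑ s ∈ Finset.range (L.card + 1), n.choose s := by
  classical
  set d := L.card with hd
  let v : ℱ → (Finset (Fin n) → ZMod p) :=
    fun A S => ∏ l ∈ L, ((((A : Finset (Fin n)) ∩ S).card : ZMod p) - l)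
  -- diagonal values are nonzero
  have hdiag : ∀ A : ℱ, v A (A : Finset (Fin n)) ≠ 0 := by
    intro A
    simp only [v, Finset.inter_self]
    rw [Finset.prod_ne_zero_iff]
    intro l hl hzero
    rw [sub_eq_zero] at hzero
    exact h1 A A.2 (hzero ▸ hl)
  -- off-diagonal values vanish
  have hoff : ∀ A B : ℱ, A ≠ B → v A (B : Finset (Fin n)) = 0 := by
    intro A B hne
    exact Finset.prod_eq_zero
      (h2 A A.2 B B.2 (fun h => hne (Subtype.ext h))) (sub_self _)
  -- linear independence
  have hli : LinearIndependent (ZMod p) v := by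
    rw [Fintype.linearIndependent_iff]
    intro g hg A
    have h := congrFun hg (A : Finset (Fin n))
    rw [Finset.sum_apply] at h
    simp only [Pi.smul_apply, smul_eq_mul, Pi.zero_apply] at h
    rw [Finset.sum_eq_single A
      (fun B _ hBA => by rw [hoff B A hBA, mul_zero])
      (fun hA => absurd (Finset.mem_univ A) hA)] at h
    exact (mul_eq_zero.mp h).resolve_right (hdiag A)
  -- membership in the span
  have hmem : ∀ A : ℱ, v A ∈ Vd p n d := by
    intro A
    have hv : v A = ∏ l ∈ L,
        (fun S => ((((A : Finset (Fin n)) ∩ S).card : ZMod p)) - l) := by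
      funext S
      rw [Finset.prod_apply]
    rw [hv]
    exact prod_mem_Vd p L _ fun l hl => factor_mem p _ l
  -- dimension bound
  let X : Finset (Finset (Fin n)) := Finset.univ.filter fun T => T.card ≤ d
  have hX : X.card = ∑ s ∈ Finset.range (d + 1), n.choose s := by
    rw [Finset.card_eq_sum_card_fiberwise (f := Finset.card) (t := Finset.range (d + 1))
      (fun T hT => by simp [X] at hT; simp; omega)]
    refine Finset.sum_congr rfl fun s hs => ?_
    rw [Finset.mem_range] at hs
    have hXs : X.filter (fun T => T.card = s) = Finset.powersetCard s Finset.univ := by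
      ext T
      simp only [X, Finset.mem_filter, Finset.mem_univ, true_and,
        Finset.mem_powersetCard, Finset.subset_univ]
      omega
    rw [hXs, Finset.card_powersetCard, Finset.card_univ, Fintype.card_fin]
  have hspan : Vd p n d = Submodule.span (ZMod p) ↑(X.image (eT p)) := by
    rw [Vd]
    congr 1
    ext x
    simp [X, Set.mem_image]
  have hfr : finrank (ZMod p) (Vd p n d) ≤ ∑ s ∈ Finset.range (d + 1), n.choose s := by
    rw [hspan]
    refine le_trans (finrank_span_finset_le_card _) ?_
    exact le_trans Finset.card_image_le (le_of_eq hX)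
  -- restrict to the submodule
  let v' : ℱ → Vd p n d := fun A => ⟨v A, hmem A⟩
  have hli' : LinearIndependent (ZMod p) v' := by
    apply LinearIndependent.of_comp (Vd p n d).subtype
    exact hli
  have hcard : Fintype.card ℱ ≤ finrank (ZMod p) (Vd p n d) :=
    hli'.fintype_card_le_finrank
  calc ℱ.card = Fintype.card ℱ := (Fintype.card_coe _).symm
    _ ≤ finrank (ZMod p) (Vd p n d) := hcard
    _ ≤ ∑ s ∈ Finset.range (d + 1), n.choose s := hfr
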